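/- Let (C_m, α_m)_{m≥0} and (D_n, β_n)_{n≥0} be sequences of ℤ-graded chain complexes of 𝔽₂-vector spaces with increment chain maps. Denote by α^k : C_m → C_{m+k} (resp. β^k : D_n → D_{n+k}) the k-fold composition of increments. Then the 𝔽₂-linear map Φ : Tel(C_m, α_m) ⊗ Tel(D_n, β_n) → Tel(C_m ⊗ D_m, α_m ⊗ β_m), defined on (x + q·x') ⊗ (y + q·y') with x, x' ∈ C_m and y, y' ∈ D_n by Φ((x + q·x') ⊗ (y + q·y')) = (x ⊗ y) + q·(x ⊗ y' + x' ⊗ y) if m = n, Φ((x + q·x') ⊗ (y + q·y')) = (α^{n−m} x) ⊗ (y + q·y') if m < n (meaning α^{n−m}x ⊗ y + q·(α^{n−m}x ⊗ y')), and Φ((x + q·x') ⊗ (y + q·y')) = (x + q·x') ⊗ (β^{m−n} y) if m > n, is a morphism of chain complexes, where the tensor product of chain complexes carries the differential Id ⊗ δ + δ ⊗ Id. -/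

import Mathlib

open DirectSum TensorProduct

/-- A ℤ-graded chain complex of vector spaces over `𝔽₂ = ZMod 2`, with a
differential `d` of degree `-1` squaring to zero. -/
structure F2GradedComplex : Type 1 where
  V : Type
  [addCommGroup : AddCommGroup V]
  [module : Module (ZMod 2) V]
  grading : ℤ → Submodule (ZMod 2) V
  internal : DirectSum.IsInternal grading
  d : V →ₗ[ZMod 2] V
  d_degree : ∀ i : ℤ, (grading i).map d ≤ grading (i - 1)
  d_sq : d ∘ₗ d = 0

attribute [instance] F2GradedComplex.addCommGroup F2GradedComplex.module

/-- A linear map is homogeneous of degree `k`. -/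
def HasDegree (C D : F2GradedComplex) (k : ℤ) (f : C.V →ₗ[ZMod 2] D.V) : Prop :=
  ∀ i : ℤ, (C.grading i).map f ≤ D.grading (i + k)

/-- A chain map: a linear map of degree `0` commuting with the differentials. -/
def IsChainMap (C D : F2GradedComplex) (f : C.V →ₗ[ZMod 2] D.V) : Prop :=
  HasDegree C D 0 f ∧ f ∘ₗ C.d = D.d ∘ₗ f

/-- Underlying module of the telescope of a sequence of modules `V_N`:
`⊕_N (V_N ⊕ q·V_N)` with `q` a formal variable of degree one. -/
abbrev TelVGen (V : ℕ → Type) [∀ N, AddCommGroup (V N)]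
    [∀ N, Module (ZMod 2) (V N)] : Type :=
  ⨁ N : ℕ, (V N × V N)

/-- The telescope differential `δ (a + q b) = d a + q (d b) + a_N b + b` of a
sequence of complexes with underlying modules `V_N`, differentials `d_N` and
increments `a_N`. -/
noncomputable def telDeltaGen (V : ℕ → Type) [∀ N, AddCommGroup (V N)]
    [∀ N, Module (ZMod 2) (V N)]
    (d : ∀ N : ℕ, V N →ₗ[ZMod 2] V N)
    (a : ∀ N : ℕ, V N →ₗ[ZMod 2] V (N + 1)) :
    TelVGen V →ₗ[ZMod 2] TelVGen V :=
  DirectSum.toModule (ZMod 2) ℕ (TelVGen V) fun N =>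
    (DirectSum.lof (ZMod 2) ℕ (fun N => V N × V N) N ∘ₗ
        LinearMap.prod
          (d N ∘ₗ LinearMap.fst (ZMod 2) (V N) (V N)
            + LinearMap.snd (ZMod 2) (V N) (V N))
          (d N ∘ₗ LinearMap.snd (ZMod 2) (V N) (V N)))
      + (DirectSum.lof (ZMod 2) ℕ (fun N => V N × V N) (N + 1) ∘ₗ
          LinearMap.prod (a N ∘ₗ LinearMap.snd (ZMod 2) (V N) (V N)) 0)

/-- Underlying module of the telescope `Tel(C_N, α_N)`. -/
abbrev TelV (C : ℕ → F2GradedComplex) : Type := TelVGen (fun N => (C N).V)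

/-- Transport along an equality of indices. -/
def castV (C : ℕ → F2GradedComplex) {k l : ℕ} (h : k = l) :
    (C k).V →ₗ[ZMod 2] (C l).V := by subst h; exact LinearMap.id

/-- Iterated increment `α^k = α ∘ ⋯ ∘ α : C_m → C_{m+k}`. -/
noncomputable def incrPow (C : ℕ → F2GradedComplex)
    (α : ∀ N : ℕ, (C N).V →ₗ[ZMod 2] (C (N + 1)).V) (m : ℕ) :
    (k : ℕ) → (C m).V →ₗ[ZMod 2] (C (m + k)).V
  | 0 => LinearMap.id
  | k + 1 => α (m + k) ∘ₗ incrPow C α m k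

/-- Iterated increment `α^{n-m} : C_m → C_n` for `m ≤ n`. -/
noncomputable def incrPowLe (C : ℕ → F2GradedComplex)
    (α : ∀ N : ℕ, (C N).V →ₗ[ZMod 2] (C (N + 1)).V) {m n : ℕ} (h : m ≤ n) :
    (C m).V →ₗ[ZMod 2] (C n).V :=
  castV C (Nat.add_sub_cancel' h) ∘ₗ incrPow C α m (n - m)

/-- Underlying module of the telescope `Tel(C_m ⊗ D_m, α_m ⊗ β_m)` of the
tensor-product complexes. -/
abbrev TensorTelV (C D : ℕ → F2GradedComplex) : Type :=
  TelVGen (fun N => TensorProduct (ZMod 2) (C N).V (D N).V)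

/-- Bilinear map `((x, x'), (y, y')) ↦ f (x, x') ⊗ g (y, y')` into the tensor
product of the `N`-th complexes. -/
noncomputable def pairTmul (C D : ℕ → F2GradedComplex) (m n N : ℕ)
    (f : ((C m).V × (C m).V) →ₗ[ZMod 2] (C N).V)
    (g : ((D n).V × (D n).V) →ₗ[ZMod 2] (D N).V) :
    ((C m).V × (C m).V) →ₗ[ZMod 2]
      ((D n).V × (D n).V) →ₗ[ZMod 2] TensorProduct (ZMod 2) (C N).V (D N).V :=
  ((TensorProduct.mk (ZMod 2) (C N).V (D N).V).comp f).compl₂ g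

/-- Inclusion of the non-`q` slot of the `N`-th summand of the target
telescope. -/
noncomputable def intoTel₁ (C D : ℕ → F2GradedComplex) (N : ℕ) :
    TensorProduct (ZMod 2) (C N).V (D N).V →ₗ[ZMod 2] TensorTelV C D :=
  DirectSum.lof (ZMod 2) ℕ
      (fun N => TensorProduct (ZMod 2) (C N).V (D N).V
        × TensorProduct (ZMod 2) (C N).V (D N).V) N ∘ₗ
    LinearMap.inl (ZMod 2) _ _

/-- Inclusion of the `q` slot of the `N`-th summand of the target telescope. -/
noncomputable def intoTel₂ (C D : ℕ → F2GradedComplex) (N : ℕ) :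
    TensorProduct (ZMod 2) (C N).V (D N).V →ₗ[ZMod 2] TensorTelV C D :=
  DirectSum.lof (ZMod 2) ℕ
      (fun N => TensorProduct (ZMod 2) (C N).V (D N).V
        × TensorProduct (ZMod 2) (C N).V (D N).V) N ∘ₗ
    LinearMap.inr (ZMod 2) _ _

/-- The `(m, n)` component of the map `Φ`, as a bilinear map
`(C_m ⊕ q C_m) → (D_n ⊕ q D_n) → Tel(C ⊗ D)`:
  * if `m = n` : `(x + q x') ⊗ (y + q y') ↦ x ⊗ y + q (x ⊗ y' + x' ⊗ y)`;
  * if `m < n` : `(x + q x') ⊗ (y + q y') ↦ α^{n-m} x ⊗ (y + q y')`;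
  * if `m > n` : `(x + q x') ⊗ (y + q y') ↦ (x + q x') ⊗ β^{m-n} y`. -/
noncomputable def phiComponent (C D : ℕ → F2GradedComplex)
    (α : ∀ N : ℕ, (C N).V →ₗ[ZMod 2] (C (N + 1)).V)
    (β : ∀ N : ℕ, (D N).V →ₗ[ZMod 2] (D (N + 1)).V) (m n : ℕ) :
    ((C m).V × (C m).V) →ₗ[ZMod 2]
      ((D n).V × (D n).V) →ₗ[ZMod 2] TensorTelV C D :=
  if h : m = n then
    (pairTmul C D m n n (castV C h ∘ₗ LinearMap.fst (ZMod 2) (C m).V (C m).V)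
        (LinearMap.fst (ZMod 2) (D n).V (D n).V)).compr₂ (intoTel₁ C D n)
      + (pairTmul C D m n n (castV C h ∘ₗ LinearMap.fst (ZMod 2) (C m).V (C m).V)
            (LinearMap.snd (ZMod 2) (D n).V (D n).V)
          + pairTmul C D m n n (castV C h ∘ₗ LinearMap.snd (ZMod 2) (C m).V (C m).V)
            (LinearMap.fst (ZMod 2) (D n).V (D n).V)).compr₂ (intoTel₂ C D n)
  else if h' : m < n then
    (pairTmul C D m n n (incrPowLe C α h'.le ∘ₗ LinearMap.fst (ZMod 2) (C m).V (C m).V)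
        (LinearMap.fst (ZMod 2) (D n).V (D n).V)).compr₂ (intoTel₁ C D n)
      + (pairTmul C D m n n (incrPowLe C α h'.le ∘ₗ LinearMap.fst (ZMod 2) (C m).V (C m).V)
          (LinearMap.snd (ZMod 2) (D n).V (D n).V)).compr₂ (intoTel₂ C D n)
  else
    (pairTmul C D m n m (LinearMap.fst (ZMod 2) (C m).V (C m).V)
        (incrPowLe D β (Nat.le_of_not_lt h') ∘ₗ LinearMap.fst (ZMod 2) (D n).V (D n).V)).compr₂
        (intoTel₁ C D m)
      + (pairTmul C D m n m (LinearMap.snd (ZMod 2) (C m).V (C m).V)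
          (incrPowLe D β (Nat.le_of_not_lt h') ∘ₗ LinearMap.fst (ZMod 2) (D n).V (D n).V)).compr₂
          (intoTel₂ C D m)

/-- The map `Φ : Tel(C_m, α_m) ⊗ Tel(D_n, β_n) → Tel(C_m ⊗ D_m, α_m ⊗ β_m)`. -/
noncomputable def telTensorPhi (C D : ℕ → F2GradedComplex)
    (α : ∀ N : ℕ, (C N).V →ₗ[ZMod 2] (C (N + 1)).V)
    (β : ∀ N : ℕ, (D N).V →ₗ[ZMod 2] (D (N + 1)).V) :
    TensorProduct (ZMod 2) (TelV C) (TelV D) →ₗ[ZMod 2] TensorTelV C D :=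
  TensorProduct.lift
    (DirectSum.toModule (ZMod 2) ℕ (TelV D →ₗ[ZMod 2] TensorTelV C D) fun m =>
      (DirectSum.toModule (ZMod 2) ℕ (((C m).V × (C m).V) →ₗ[ZMod 2] TensorTelV C D)
        fun n => (phiComponent C D α β m n).flip).flip)


section Helpers
variable (C D : ℕ → F2GradedComplex)
    (α : ∀ N : ℕ, (C N).V →ₗ[ZMod 2] (C (N + 1)).V)
    (β : ∀ N : ℕ, (D N).V →ₗ[ZMod 2] (D (N + 1)).V)

lemma castV_rfl (k : ℕ) (h : k = k) : castV C h = LinearMap.id := rfl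

lemma castV_comp {k l j : ℕ} (h1 : k = l) (h2 : l = j) :
    castV C h2 ∘ₗ castV C h1 = castV C (h1.trans h2) := by subst h1; subst h2; rfl

lemma castV_alpha {k l : ℕ} (h : k = l) :
    α l ∘ₗ castV C h = castV C (by rw [h]) ∘ₗ α k := by subst h; rfl

lemma incrPow_congr (m : ℕ) {k k' : ℕ} (h : k = k') (hh : m + k = m + k') :
    incrPow C α m k' = castV C hh ∘ₗ incrPow C α m k := by subst h; rfl

lemma incrPowLe_eq {m n : ℕ} (h : m ≤ n) (k : ℕ) (hk : m + k = n) :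
    incrPowLe C α h = castV C hk ∘ₗ incrPow C α m k := by
  obtain rfl : k = n - m := by omega
  rfl

lemma incrPowLe_refl (m : ℕ) (h : m ≤ m) : incrPowLe C α h = LinearMap.id := by
  rw [incrPowLe_eq C α h 0 rfl]; rfl

lemma incrPowLe_succ {m n : ℕ} (h : m ≤ n) (h' : m ≤ n + 1) :
    incrPowLe C α h' = α n ∘ₗ incrPowLe C α h := by
  have e : m + (n - m) = n := by omega
  rw [incrPowLe_eq C α h' (n - m + 1) (by omega), incrPowLe_eq C α h (n - m) e]
  show castV C _ ∘ₗ (α (m + (n - m)) ∘ₗ incrPow C α m (n - m)) = _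
  rw [← LinearMap.comp_assoc, ← LinearMap.comp_assoc, ← castV_alpha C α e]

lemma incrPowLe_comp {m n : ℕ} (h : m + 1 ≤ n) (h' : m ≤ n) :
    incrPowLe C α h ∘ₗ α m = incrPowLe C α h' := by
  induction n, h using Nat.le_induction with
  | base =>
      rw [incrPowLe_refl, incrPowLe_succ C α (le_refl m) h', incrPowLe_refl]
      rfl
  | succ n hn ih =>
      rw [incrPowLe_succ C α hn (by omega), incrPowLe_succ C α (by omega : m ≤ n) h',
        LinearMap.comp_assoc, ih (by omega)]

lemma incrPowLe_d {m n : ℕ} (hα : ∀ N : ℕ, IsChainMap (C N) (C (N + 1)) (α N))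
    (h : m ≤ n) :
    (C n).d ∘ₗ incrPowLe C α h = incrPowLe C α h ∘ₗ (C m).d := by
  induction n, h using Nat.le_induction with
  | base => rw [incrPowLe_refl]; rfl
  | succ n hn ih =>
      rw [incrPowLe_succ C α hn (by omega), ← LinearMap.comp_assoc, ← (hα n).2,
        LinearMap.comp_assoc, ih, LinearMap.comp_assoc]

lemma add_self_zero {M : Type} [AddCommGroup M] [Module (ZMod 2) M] (a : M) :
    a + a = 0 := by
  rw [← two_smul (ZMod 2) a, show (2:ZMod 2) = 0 from rfl, zero_smul]

lemma telDeltaGen_lof (V : ℕ → Type) [∀ N, AddCommGroup (V N)]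
    [∀ N, Module (ZMod 2) (V N)]
    (d : ∀ N : ℕ, V N →ₗ[ZMod 2] V N)
    (a : ∀ N : ℕ, V N →ₗ[ZMod 2] V (N + 1)) (N : ℕ) (p : V N × V N) :
    telDeltaGen V d a (DirectSum.lof (ZMod 2) ℕ (fun N => V N × V N) N p)
      = DirectSum.lof (ZMod 2) ℕ (fun N => V N × V N) N (d N p.1 + p.2, d N p.2)
        + DirectSum.lof (ZMod 2) ℕ (fun N => V N × V N) (N + 1) (a N p.2, 0) := by
  simp [telDeltaGen, DirectSum.toModule_lof, Prod.ext_iff]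

lemma telTensorPhi_tmul (m n : ℕ) (p : (C m).V × (C m).V) (q : (D n).V × (D n).V) :
    telTensorPhi C D α β
      (DirectSum.lof (ZMod 2) ℕ (fun N => (C N).V × (C N).V) m p ⊗ₜ[ZMod 2]
        DirectSum.lof (ZMod 2) ℕ (fun N => (D N).V × (D N).V) n q)
      = phiComponent C D α β m n p q := by
  simp [telTensorPhi, DirectSum.toModule_lof]

lemma phiComponent_diag (n : ℕ) (p : (C n).V × (C n).V) (q : (D n).V × (D n).V) :
    phiComponent C D α β n n p q
      = intoTel₁ C D n (p.1 ⊗ₜ q.1) + intoTel₂ C D n (p.1 ⊗ₜ q.2 + p.2 ⊗ₜ q.1) := by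
  rw [phiComponent, dif_pos rfl]
  simp [pairTmul, castV_rfl]

lemma phiComponent_lt {m n : ℕ} (h : m < n) (p : (C m).V × (C m).V)
    (q : (D n).V × (D n).V) :
    phiComponent C D α β m n p q
      = intoTel₁ C D n (incrPowLe C α h.le p.1 ⊗ₜ q.1)
        + intoTel₂ C D n (incrPowLe C α h.le p.1 ⊗ₜ q.2) := by
  rw [phiComponent, dif_neg h.ne, dif_pos h]
  simp [pairTmul]

lemma phiComponent_gt {m n : ℕ} (h : n < m) (p : (C m).V × (C m).V)
    (q : (D n).V × (D n).V) :
    phiComponent C D α β m n p q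
      = intoTel₁ C D m (p.1 ⊗ₜ incrPowLe D β h.le q.1)
        + intoTel₂ C D m (p.2 ⊗ₜ incrPowLe D β h.le q.1) := by
  rw [phiComponent, dif_neg h.ne', dif_neg (by omega)]
  simp [pairTmul]

noncomputable def deltaT : TensorTelV C D →ₗ[ZMod 2] TensorTelV C D :=
  telDeltaGen (fun N => TensorProduct (ZMod 2) (C N).V (D N).V)
    (fun N => TensorProduct.map LinearMap.id (D N).d
      + TensorProduct.map (C N).d LinearMap.id)
    (fun N => TensorProduct.map (α N) (β N))

lemma deltaT_intoTel₁ (N : ℕ) (u : TensorProduct (ZMod 2) (C N).V (D N).V) :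
    deltaT C D α β (intoTel₁ C D N u)
      = intoTel₁ C D N (TensorProduct.map LinearMap.id (D N).d u
          + TensorProduct.map (C N).d LinearMap.id u) := by
  simp [deltaT, intoTel₁, telDeltaGen_lof, Prod.mk_zero_zero]

lemma deltaT_intoTel₂ (N : ℕ) (v : TensorProduct (ZMod 2) (C N).V (D N).V) :
    deltaT C D α β (intoTel₂ C D N v)
      = intoTel₁ C D N v
        + intoTel₂ C D N (TensorProduct.map LinearMap.id (D N).d v
            + TensorProduct.map (C N).d LinearMap.id v)
        + intoTel₁ C D (N + 1) (TensorProduct.map (α N) (β N) v) := by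
  simp only [deltaT, intoTel₁, intoTel₂, telDeltaGen_lof, LinearMap.comp_apply,
    LinearMap.inl_apply, LinearMap.inr_apply, LinearMap.add_apply, map_zero, zero_add, add_zero]
  rw [← map_add, Prod.mk_add_mk, add_zero, zero_add]

lemma incrPowLe_one {m : ℕ} (h : m ≤ m + 1) : incrPowLe C α h = α m := by
  rw [incrPowLe_succ C α (le_refl m) h, incrPowLe_refl, LinearMap.comp_id]

lemma key (hα : ∀ N : ℕ, IsChainMap (C N) (C (N + 1)) (α N))
    (hβ : ∀ N : ℕ, IsChainMap (D N) (D (N + 1)) (β N))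
    (m n : ℕ) (p : (C m).V × (C m).V) (q : (D n).V × (D n).V) :
    phiComponent C D α β m n p ((D n).d q.1 + q.2, (D n).d q.2)
      + phiComponent C D α β m (n + 1) p (β n q.2, 0)
      + phiComponent C D α β m n ((C m).d p.1 + p.2, (C m).d p.2) q
      + phiComponent C D α β (m + 1) n (α m p.2, 0) q
    = deltaT C D α β (phiComponent C D α β m n p q) := by
  obtain ⟨x, x'⟩ := p
  obtain ⟨y, y'⟩ := q
  rcases lt_trichotomy m n with h | rfl | h
  · -- m < n
    have e3 := LinearMap.congr_fun (incrPowLe_d C α hα h.le)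
    simp only [LinearMap.comp_apply] at e3
    obtain h1 | h1 : m + 1 = n ∨ m + 1 < n := by omega
    · -- n = m + 1
      subst h1
      simp only [phiComponent_lt C D α β h, phiComponent_lt C D α β (show m < m + 1 + 1 by omega),
        phiComponent_diag]
      rw [incrPowLe_succ C α h.le (show m ≤ m + 1 + 1 by omega), incrPowLe_one C α h.le]
      simp only [map_add, deltaT_intoTel₁, deltaT_intoTel₂, LinearMap.comp_apply, tmul_add,
        add_tmul, tmul_zero, zero_tmul, TensorProduct.map_tmul, LinearMap.id_apply, map_zero,
        add_zero, zero_add]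
      simp only [incrPowLe_one C α h.le] at e3
      simp only [e3 x]
      rw [← sub_eq_zero]
      abel_nf
      simp [two_zsmul, two_nsmul, add_self_zero]
    · -- m + 1 < n
      have e1 := incrPowLe_succ C α h.le (show m ≤ n + 1 by omega)
      have e2 := LinearMap.congr_fun (incrPowLe_comp C α h1.le h.le)
      simp only [LinearMap.comp_apply] at e2
      simp only [phiComponent_lt C D α β h, phiComponent_lt C D α β (show m < n + 1 by omega),
        phiComponent_lt C D α β h1]
      rw [e1]
      simp only [map_add, deltaT_intoTel₁, deltaT_intoTel₂, LinearMap.comp_apply, tmul_add,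
        add_tmul, tmul_zero, zero_tmul, TensorProduct.map_tmul, LinearMap.id_apply, map_zero,
        add_zero, zero_add]
      simp only [e2, e3 x]
      rw [← sub_eq_zero]
      abel_nf
      simp [two_zsmul, two_nsmul, add_self_zero]
  · -- m = n
    simp only [phiComponent_diag, phiComponent_lt C D α β (show m < m + 1 by omega),
      phiComponent_gt C D α β (show m < m + 1 by omega)]
    rw [incrPowLe_one C α, incrPowLe_one D β]
    simp only [map_add, deltaT_intoTel₁, deltaT_intoTel₂, LinearMap.comp_apply, tmul_add,
      add_tmul, tmul_zero, zero_tmul, TensorProduct.map_tmul, LinearMap.id_apply, map_zero,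
      add_zero, zero_add]
    rw [← sub_eq_zero]
    abel_nf
    simp [two_zsmul, two_nsmul, add_self_zero]
  · -- n < m
    have e3 := LinearMap.congr_fun (incrPowLe_d D β hβ h.le)
    simp only [LinearMap.comp_apply] at e3
    have e4 := incrPowLe_succ D β h.le (show n ≤ m + 1 by omega)
    obtain h1 | h1 : n + 1 = m ∨ n + 1 < m := by omega
    · -- m = n + 1
      subst h1
      simp only [phiComponent_gt C D α β h,
        phiComponent_gt C D α β (show n < n + 1 + 1 by omega), phiComponent_diag]
      rw [e4, incrPowLe_one D β h.le]
      simp only [map_add, deltaT_intoTel₁, deltaT_intoTel₂, LinearMap.comp_apply, tmul_add,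
        add_tmul, tmul_zero, zero_tmul, TensorProduct.map_tmul, LinearMap.id_apply, map_zero,
        add_zero, zero_add]
      simp only [incrPowLe_one D β h.le] at e3
      simp only [e3 y]
      rw [← sub_eq_zero]
      abel_nf
      simp [two_zsmul, two_nsmul, add_self_zero]
    · -- n + 1 < m
      have e2 := LinearMap.congr_fun (incrPowLe_comp D β h1.le h.le)
      simp only [LinearMap.comp_apply] at e2
      simp only [phiComponent_gt C D α β h, phiComponent_gt C D α β h1,
        phiComponent_gt C D α β (show n < m + 1 by omega)]
      rw [e4]
      simp only [map_add, deltaT_intoTel₁, deltaT_intoTel₂, LinearMap.comp_apply, tmul_add,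
        add_tmul, tmul_zero, zero_tmul, TensorProduct.map_tmul, LinearMap.id_apply, map_zero,
        add_zero, zero_add]
      simp only [e2, e3 y]
      rw [← sub_eq_zero]
      abel_nf
      simp [two_zsmul, two_nsmul, add_self_zero]

end Helpers

/-- The map `Φ` is a morphism of chain complexes from
`Tel(C_m, α_m) ⊗ Tel(D_n, β_n)` (with the differential `Id ⊗ δ + δ ⊗ Id`) to
the telescope `Tel(C_m ⊗ D_m, α_m ⊗ β_m)` of the tensor-product complexes
(each `C_m ⊗ D_m` carrying the differential `Id ⊗ d + d ⊗ Id`). -/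
theorem telTensorPhi_chainMap (C D : ℕ → F2GradedComplex)
    (α : ∀ N : ℕ, (C N).V →ₗ[ZMod 2] (C (N + 1)).V)
    (hα : ∀ N : ℕ, IsChainMap (C N) (C (N + 1)) (α N))
    (β : ∀ N : ℕ, (D N).V →ₗ[ZMod 2] (D (N + 1)).V)
    (hβ : ∀ N : ℕ, IsChainMap (D N) (D (N + 1)) (β N)) :
    telTensorPhi C D α β ∘ₗ
        (TensorProduct.map LinearMap.id
            (telDeltaGen (fun N => (D N).V) (fun N => (D N).d) β)
          + TensorProduct.map
              (telDeltaGen (fun N => (C N).V) (fun N => (C N).d) α) LinearMap.id)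
      = telDeltaGen (fun N => TensorProduct (ZMod 2) (C N).V (D N).V)
          (fun N => TensorProduct.map LinearMap.id (D N).d
            + TensorProduct.map (C N).d LinearMap.id)
          (fun N => TensorProduct.map (α N) (β N))
        ∘ₗ telTensorPhi C D α β := by
  apply TensorProduct.ext
  apply DirectSum.linearMap_ext
  intro m
  apply LinearMap.ext
  intro p
  apply DirectSum.linearMap_ext
  intro n
  apply LinearMap.ext
  intro q
  have hkey := key C D α β hα hβ m n p q
  simp only [deltaT] at hkey
  simp only [LinearMap.comp_apply, LinearMap.compr₂ₛₗ_apply, TensorProduct.mk_apply,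
    LinearMap.add_apply, TensorProduct.map_tmul, LinearMap.id_apply, telDeltaGen_lof,
    tmul_add, add_tmul, map_add, telTensorPhi_tmul]
  rw [← hkey]
  abel
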